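/- Let μ₋ ≥ 0, ω > 0, l ∈ ℕ, k ∈ ℕ with l > k, and define on [0, μ₋ + ω] the function φ_log(z) = log⁺( (ω/2^k) / (ω/2^k - (z - (μ₋ + ω - ω/2^k))₊ + ω/2^l) ). Then for all z ≥ μ₋ + ω - ω/2^l, one has φ_log(z) ≥ (l - k - 1) log 2, and for all z ≤ μ₋ + ω, one has φ_log(z) ≤ (l - k) log 2. -/

import Mathlib

open Set

theorem stmt_7 (μm ω : ℝ) (k l : ℕ) (hμ : 0 ≤ μm) (hω : 0 < ω) (hkl : k < l) :
    (∀ z : ℝ, μm + ω - ω / 2 ^ l ≤ z → z ≤ μm + ω →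
      ((l : ℝ) - k - 1) * Real.log 2 ≤
        max (Real.log ((ω / 2 ^ k) /
          (ω / 2 ^ k - max (z - (μm + ω - ω / 2 ^ k)) 0 + ω / 2 ^ l))) 0) ∧
    (∀ z : ℝ, 0 ≤ z → z ≤ μm + ω →
      max (Real.log ((ω / 2 ^ k) /
        (ω / 2 ^ k - max (z - (μm + ω - ω / 2 ^ k)) 0 + ω / 2 ^ l))) 0 ≤
        ((l : ℝ) - k) * Real.log 2) := by
  have hb : (0:ℝ) < ω / 2 ^ l := by positivity
  have ha : (0:ℝ) < ω / 2 ^ k := by positivity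
  have hab : ω / 2 ^ l ≤ ω / 2 ^ k := by
    apply div_le_div_of_nonneg_left hω.le (by positivity)
    exact pow_le_pow_right₀ one_le_two hkl.le
  constructor
  · intro z hz1 hz2
    set m := max (z - (μm + ω - ω / 2 ^ k)) 0 with hm
    have hm1 : ω / 2 ^ k - ω / 2 ^ l ≤ m := le_max_of_le_left (by linarith)
    have hm2 : m ≤ ω / 2 ^ k := max_le (by linarith) ha.le
    have hD : 0 < ω / 2 ^ k - m + ω / 2 ^ l := by linarith
    have hD2 : ω / 2 ^ k - m + ω / 2 ^ l ≤ 2 * (ω / 2 ^ l) := by linarith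
    have hpow : (2:ℝ) ^ (l - k - 1) * 2 * 2 ^ k = 2 ^ l := by
      rw [← pow_succ, ← pow_add]; congr 1; omega
    have key : (2:ℝ) ^ (l - k - 1) ≤ (ω / 2 ^ k) / (ω / 2 ^ k - m + ω / 2 ^ l) := by
      rw [le_div_iff₀ hD]
      calc (2:ℝ) ^ (l - k - 1) * (ω / 2 ^ k - m + ω / 2 ^ l)
          ≤ (2:ℝ) ^ (l - k - 1) * (2 * (ω / 2 ^ l)) :=
            mul_le_mul_of_nonneg_left hD2 (by positivity)
        _ = ω / 2 ^ k := by
            field_simp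
            linear_combination hpow
    have hlog : Real.log (2 ^ (l - k - 1)) ≤
        Real.log ((ω / 2 ^ k) / (ω / 2 ^ k - m + ω / 2 ^ l)) :=
      Real.log_le_log (by positivity) key
    rw [Real.log_pow] at hlog
    refine le_trans ?_ (le_trans hlog (le_max_left _ _))
    have hc : ((l - k - 1:ℕ):ℝ) = (l:ℝ) - k - 1 := by
      rw [show l - k - 1 = l - (k+1) from by omega, Nat.cast_sub hkl]
      push_cast; ring
    rw [hc]
  · intro z hz1 hz2
    set m := max (z - (μm + ω - ω / 2 ^ k)) 0 with hm
    have hm1 : 0 ≤ m := le_max_right _ _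
    have hm2 : m ≤ ω / 2 ^ k := max_le (by linarith) ha.le
    have hD : ω / 2 ^ l ≤ ω / 2 ^ k - m + ω / 2 ^ l := by linarith
    have key : (ω / 2 ^ k) / (ω / 2 ^ k - m + ω / 2 ^ l) ≤ 2 ^ (l - k) := by
      rw [div_le_iff₀ (by linarith)]
      calc ω / 2 ^ k = 2 ^ (l - k) * (ω / 2 ^ l) := by
            have hpow : (2:ℝ) ^ (l - k) * 2 ^ k = 2 ^ l := by
              rw [← pow_add]; congr 1; omega
            field_simp
            linear_combination -hpow
        _ ≤ 2 ^ (l - k) * (ω / 2 ^ k - m + ω / 2 ^ l) :=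
            mul_le_mul_of_nonneg_left hD (by positivity)
    have hpos : 0 < (ω / 2 ^ k) / (ω / 2 ^ k - m + ω / 2 ^ l) := by
      apply div_pos ha; linarith
    have hlog : Real.log ((ω / 2 ^ k) / (ω / 2 ^ k - m + ω / 2 ^ l)) ≤
        ((l - k : ℕ) : ℝ) * Real.log 2 := by
      rw [← Real.log_pow]
      exact Real.log_le_log hpos key
    rw [Nat.cast_sub hkl.le] at hlog
    exact max_le hlog (mul_nonneg (sub_nonneg.mpr (by exact_mod_cast hkl.le))
      (Real.log_nonneg one_le_two))
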